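/- Let ε > 0, π ∈ [0,1], μ_1, μ_2 ∈ ℝ, and σ_1, σ_2 ≥ 0. On a probability space, let W be {0,1}-valued with Pr[W=1] = π, let Z_1, Z_2 be {0,1}-valued with Pr[Z_1=1] = Pr[Z_2=1] = e^ε/(e^ε+1), and let X_1, X_2 be square-integrable real-valued random variables with E[X_j] = μ_j and Var(X_j) = σ_j² for j ∈ {1,2}, such that W, Z_1, Z_2, X_1, X_2 are mutually independent. Define Y^ε[2] = Z_1·W·X_1 + (1−Z_2)·(1−W)·X_2 and Y^ε[3] = (1−Z_1)·W·X_1 + Z_2·(1−W)·X_2. Then Var(Y^ε[2]) = μ_1²·(1 − π·e^ε/(e^ε+1))·(π·e^ε/(e^ε+1)) + μ_2²·(1 − (1−π)/(e^ε+1))·((1−π)/(e^ε+1)) − 2·(π·(1−π)·e^ε/(e^ε+1)²)·μ_1·μ_2 + (π·e^ε/(e^ε+1))·σ_1² + ((1−π)/(e^ε+1))·σ_2², and Var(Y^ε[3]) = μ_1²·(1 − π/(e^ε+1))·(π/(e^ε+1)) + μ_2²·(1 − (1−π)·e^ε/(e^ε+1))·((1−π)·e^ε/(e^ε+1)) − 2·(π·(1−π)·e^ε/(e^ε+1)²)·μ_1·μ_2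 + (π/(e^ε+1))·σ_1² + ((1−π)·e^ε/(e^ε+1))·σ_2². -/

import Mathlib

open MeasureTheory ProbabilityTheory

section Helpers

variable {Ω : Type*} [MeasurableSpace Ω] (P : Measure Ω) [IsProbabilityMeasure P]

lemma bool_integrable {f : Ω → ℝ} (hm : Measurable f) (h01 : ∀ ω, f ω = 0 ∨ f ω = 1) :
    Integrable f P := by
  refine (integrable_const (1:ℝ)).mono' hm.aestronglyMeasurable ?_
  filter_upwards with ω
  rcases h01 ω with h | h <;> simp [h]

lemma bool_integral {f : Ω → ℝ} (hm : Measurable f) (h01 : ∀ ω, f ω = 0 ∨ f ω = 1) :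
    ∫ ω, f ω ∂P = (P {ω | f ω = 1}).toReal := by
  have hset : MeasurableSet {ω | f ω = 1} := hm (measurableSet_singleton 1)
  have hf : f = Set.indicator {ω | f ω = 1} (fun _ => (1:ℝ)) := by
    funext ω
    rcases h01 ω with h | h <;> simp [Set.indicator, h]
  rw [hf, integral_indicator hset]
  simp [measureReal_def]

lemma var_two_blocks (B1 B2 X1 X2 : Ω → ℝ) (q1 q2 m1 m2 v1 v2 : ℝ)
    (hB1m : Measurable B1) (hB2m : Measurable B2)
    (hX1m : Measurable X1) (hX2m : Measurable X2)
    (hB101 : ∀ ω, B1 ω = 0 ∨ B1 ω = 1) (hB201 : ∀ ω, B2 ω = 0 ∨ B2 ω = 1)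
    (hB12 : ∀ ω, B1 ω * B2 ω = 0)
    (hI1 : IndepFun B1 X1 P) (hI2 : IndepFun B2 X2 P)
    (hq1 : ∫ ω, B1 ω ∂P = q1) (hq2 : ∫ ω, B2 ω ∂P = q2)
    (hX1sq : MemLp X1 2 P) (hX2sq : MemLp X2 2 P)
    (hm1 : ∫ ω, X1 ω ∂P = m1) (hm2 : ∫ ω, X2 ω ∂P = m2)
    (hv1 : variance X1 P = v1) (hv2 : variance X2 P = v2) :
    variance (fun ω => B1 ω * X1 ω + B2 ω * X2 ω) P
      = q1 * (v1 + m1 ^ 2) + q2 * (v2 + m2 ^ 2) - (q1 * m1 + q2 * m2) ^ 2 := by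
  have hL1 : MemLp (fun ω => B1 ω * X1 ω) 2 P := by
    refine hX1sq.of_le (hB1m.mul hX1m).aestronglyMeasurable ?_
    filter_upwards with ω
    rcases hB101 ω with h | h <;> simp [h, abs_nonneg]
  have hL2 : MemLp (fun ω => B2 ω * X2 ω) 2 P := by
    refine hX2sq.of_le (hB2m.mul hX2m).aestronglyMeasurable ?_
    filter_upwards with ω
    rcases hB201 ω with h | h <;> simp [h, abs_nonneg]
  have hY : MemLp (fun ω => B1 ω * X1 ω + B2 ω * X2 ω) 2 P := hL1.add hL2
  have hsq1 : ∫ ω, X1 ω ^ 2 ∂P = v1 + m1 ^ 2 := by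
    have := variance_eq_sub hX1sq
    rw [hv1, hm1] at this
    have h2 : ∫ ω, (X1 ^ 2) ω ∂P = ∫ ω, X1 ω ^ 2 ∂P := by simp [Pi.pow_apply]
    rw [h2] at this
    linarith
  have hsq2 : ∫ ω, X2 ω ^ 2 ∂P = v2 + m2 ^ 2 := by
    have := variance_eq_sub hX2sq
    rw [hv2, hm2] at this
    have h2 : ∫ ω, (X2 ^ 2) ω ∂P = ∫ ω, X2 ω ^ 2 ∂P := by simp [Pi.pow_apply]
    rw [h2] at this
    linarith
  have hmean : ∫ ω, (B1 ω * X1 ω + B2 ω * X2 ω) ∂P = q1 * m1 + q2 * m2 := by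
    rw [integral_add (hL1.integrable one_le_two) (hL2.integrable one_le_two)]
    rw [hI1.integral_fun_mul_eq_mul_integral (hB1m.aestronglyMeasurable) (hX1m.aestronglyMeasurable),
      hI2.integral_fun_mul_eq_mul_integral (hB2m.aestronglyMeasurable) (hX2m.aestronglyMeasurable),
      hq1, hq2, hm1, hm2]
  have hIsq1 : IndepFun B1 (fun ω => X1 ω ^ 2) P :=
    hI1.comp measurable_id (measurable_id.pow_const 2)
  have hIsq2 : IndepFun B2 (fun ω => X2 ω ^ 2) P :=
    hI2.comp measurable_id (measurable_id.pow_const 2)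
  have hint1 : Integrable (fun ω => B1 ω * X1 ω ^ 2) P := by
    refine hX1sq.integrable_sq.mono' ((hB1m.mul (hX1m.pow_const 2)).aestronglyMeasurable) ?_
    filter_upwards with ω
    rcases hB101 ω with h | h <;> simp [h, sq_abs, sq_nonneg, abs_nonneg]
  have hint2 : Integrable (fun ω => B2 ω * X2 ω ^ 2) P := by
    refine hX2sq.integrable_sq.mono' ((hB2m.mul (hX2m.pow_const 2)).aestronglyMeasurable) ?_
    filter_upwards with ω
    rcases hB201 ω with h | h <;> simp [h, sq_abs, sq_nonneg, abs_nonneg]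
  have hsqY : ∫ ω, (B1 ω * X1 ω + B2 ω * X2 ω) ^ 2 ∂P
      = q1 * (v1 + m1 ^ 2) + q2 * (v2 + m2 ^ 2) := by
    have hpt : ∀ ω, (B1 ω * X1 ω + B2 ω * X2 ω) ^ 2
        = B1 ω * X1 ω ^ 2 + B2 ω * X2 ω ^ 2 := by
      intro ω
      rcases hB101 ω with h | h <;> rcases hB201 ω with h' | h'
      · simp [h, h']
      · simp [h, h']
      · simp [h, h']
      · have h12 := hB12 ω; rw [h, h'] at h12; norm_num at h12
    rw [show (fun ω => (B1 ω * X1 ω + B2 ω * X2 ω) ^ 2)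
        = fun ω => B1 ω * X1 ω ^ 2 + B2 ω * X2 ω ^ 2 from funext hpt]
    rw [integral_add hint1 hint2,
      hIsq1.integral_fun_mul_eq_mul_integral hB1m.aestronglyMeasurable ((hX1m.pow_const 2).aestronglyMeasurable),
      hIsq2.integral_fun_mul_eq_mul_integral hB2m.aestronglyMeasurable ((hX2m.pow_const 2).aestronglyMeasurable),
      hq1, hq2, hsq1, hsq2]
  rw [variance_eq_sub hY]
  have h2 : ∫ ω, ((fun ω => B1 ω * X1 ω + B2 ω * X2 ω) ^ 2) ω ∂P
      = ∫ ω, (B1 ω * X1 ω + B2 ω * X2 ω) ^ 2 ∂P := by simp [Pi.pow_apply]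
  rw [h2, hsqY, hmean]

end Helpers

/-- Variances of the privatized first-moment coordinates of a single sample in the private
two-means test: `W` indicates group 1, `X_1, X_2` are the group outcomes with means
`μ_1, μ_2` and variances `σ_1², σ_2²`, and `Z_1, Z_2` implement binary randomized response
on the group label. -/
theorem stmt15 (ε pgrp μ1 μ2 σ1 σ2 : ℝ) (hε : 0 < ε) (hpgrp : pgrp ∈ Set.Icc (0:ℝ) 1)
    (hσ1 : 0 ≤ σ1) (hσ2 : 0 ≤ σ2)
    (Ω : Type*) [MeasurableSpace Ω] (P : Measure Ω) [IsProbabilityMeasure P]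
    (W Z1 Z2 X1 X2 : Ω → ℝ)
    (hW01 : ∀ ω, W ω = 0 ∨ W ω = 1)
    (hZ101 : ∀ ω, Z1 ω = 0 ∨ Z1 ω = 1)
    (hZ201 : ∀ ω, Z2 ω = 0 ∨ Z2 ω = 1)
    (hWm : Measurable W) (hZ1m : Measurable Z1) (hZ2m : Measurable Z2)
    (hX1m : Measurable X1) (hX2m : Measurable X2)
    (hW : P {ω | W ω = 1} = ENNReal.ofReal pgrp)
    (hZ1 : P {ω | Z1 ω = 1} = ENNReal.ofReal (Real.exp ε / (Real.exp ε + 1)))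
    (hZ2 : P {ω | Z2 ω = 1} = ENNReal.ofReal (Real.exp ε / (Real.exp ε + 1)))
    (hX1sq : MemLp X1 2 P) (hX2sq : MemLp X2 2 P)
    (hX1 : ∫ ω, X1 ω ∂P = μ1) (hX2 : ∫ ω, X2 ω ∂P = μ2)
    (hVar1 : variance X1 P = σ1 ^ 2) (hVar2 : variance X2 P = σ2 ^ 2)
    (hindep : iIndepFun ![W, Z1, Z2, X1, X2] P) :
    (variance (fun ω => Z1 ω * W ω * X1 ω + (1 - Z2 ω) * (1 - W ω) * X2 ω) P
      = μ1 ^ 2 * (1 - pgrp * Real.exp ε / (Real.exp ε + 1))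
            * (pgrp * Real.exp ε / (Real.exp ε + 1))
        + μ2 ^ 2 * (1 - (1 - pgrp) / (Real.exp ε + 1)) * ((1 - pgrp) / (Real.exp ε + 1))
        - 2 * (pgrp * (1 - pgrp) * Real.exp ε / (Real.exp ε + 1) ^ 2) * μ1 * μ2
        + (pgrp * Real.exp ε / (Real.exp ε + 1)) * σ1 ^ 2
        + ((1 - pgrp) / (Real.exp ε + 1)) * σ2 ^ 2) ∧
    (variance (fun ω => (1 - Z1 ω) * W ω * X1 ω + Z2 ω * (1 - W ω) * X2 ω) P
      = μ1 ^ 2 * (1 - pgrp / (Real.exp ε + 1)) * (pgrp / (Real.exp ε + 1))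
        + μ2 ^ 2 * (1 - (1 - pgrp) * Real.exp ε / (Real.exp ε + 1))
            * ((1 - pgrp) * Real.exp ε / (Real.exp ε + 1))
        - 2 * (pgrp * (1 - pgrp) * Real.exp ε / (Real.exp ε + 1) ^ 2) * μ1 * μ2
        + (pgrp / (Real.exp ε + 1)) * σ1 ^ 2
        + ((1 - pgrp) * Real.exp ε / (Real.exp ε + 1)) * σ2 ^ 2) := by
  obtain ⟨hp0, hp1⟩ := hpgrp
  have hEpos : 0 < Real.exp ε := Real.exp_pos ε
  have hE1 : (0:ℝ) < Real.exp ε + 1 := by linarith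
  have hE1ne : Real.exp ε + 1 ≠ 0 := ne_of_gt hE1
  set a : ℝ := Real.exp ε / (Real.exp ε + 1) with ha
  have ha0 : 0 ≤ a := div_nonneg hEpos.le hE1.le
  have ha1 : a ≤ 1 := by rw [ha, div_le_one hE1]; linarith
  have hmeas : ∀ i, Measurable (![W, Z1, Z2, X1, X2] i) := by
    intro i; fin_cases i <;> simpa
  -- basic integrals
  have hIW : ∫ ω, W ω ∂P = pgrp := by
    rw [bool_integral P hWm hW01, hW, ENNReal.toReal_ofReal hp0]
  have hIZ1 : ∫ ω, Z1 ω ∂P = a := by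
    rw [bool_integral P hZ1m hZ101, hZ1, ENNReal.toReal_ofReal ha0]
  have hIZ2 : ∫ ω, Z2 ω ∂P = a := by
    rw [bool_integral P hZ2m hZ201, hZ2, ENNReal.toReal_ofReal ha0]
  have hI1mW : ∫ ω, (1 - W ω) ∂P = 1 - pgrp := by
    rw [integral_sub (integrable_const 1) (bool_integrable P hWm hW01)]
    simp [hIW]
  have hI1mZ1 : ∫ ω, (1 - Z1 ω) ∂P = 1 - a := by
    rw [integral_sub (integrable_const 1) (bool_integrable P hZ1m hZ101)]
    simp [hIZ1]
  have hI1mZ2 : ∫ ω, (1 - Z2 ω) ∂P = 1 - a := by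
    rw [integral_sub (integrable_const 1) (bool_integrable P hZ2m hZ201)]
    simp [hIZ2]
  -- pairwise independence
  have hiZ1W : IndepFun Z1 W P := hindep.indepFun (show (1:Fin 5) ≠ 0 by decide)
  have hiZ2W : IndepFun Z2 W P := hindep.indepFun (show (2:Fin 5) ≠ 0 by decide)
  -- means of the Bernoulli coefficients
  have hq1 : ∫ ω, Z1 ω * W ω ∂P = a * pgrp := by
    have h := hiZ1W.integral_fun_mul_eq_mul_integral hZ1m.aestronglyMeasurable hWm.aestronglyMeasurable
    rw [hIZ1, hIW] at h; exact h
  have hq2 : ∫ ω, (1 - Z2 ω) * (1 - W ω) ∂P = (1 - a) * (1 - pgrp) := by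
    have hi : IndepFun (fun ω => 1 - Z2 ω) (fun ω => 1 - W ω) P :=
      hiZ2W.comp (measurable_const.sub measurable_id) (measurable_const.sub measurable_id)
    have h := hi.integral_fun_mul_eq_mul_integral (measurable_const.sub hZ2m).aestronglyMeasurable
      (measurable_const.sub hWm).aestronglyMeasurable
    rw [hI1mZ2, hI1mW] at h; exact h
  have hq1' : ∫ ω, (1 - Z1 ω) * W ω ∂P = (1 - a) * pgrp := by
    have hi : IndepFun (fun ω => 1 - Z1 ω) W P :=
      hiZ1W.comp (measurable_const.sub measurable_id) measurable_id
    have h := hi.integral_fun_mul_eq_mul_integral (measurable_const.sub hZ1m).aestronglyMeasurable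
      hWm.aestronglyMeasurable
    rw [hI1mZ1, hIW] at h; exact h
  have hq2' : ∫ ω, Z2 ω * (1 - W ω) ∂P = a * (1 - pgrp) := by
    have hi : IndepFun Z2 (fun ω => 1 - W ω) P :=
      hiZ2W.comp measurable_id (measurable_const.sub measurable_id)
    have h := hi.integral_fun_mul_eq_mul_integral hZ2m.aestronglyMeasurable
      (measurable_const.sub hWm).aestronglyMeasurable
    rw [hIZ2, hI1mW] at h; exact h
  -- independence of the coefficients from the outcomes
  have hI1 : IndepFun (fun ω => Z1 ω * W ω) X1 P := by
    have h := hindep.indepFun_prodMk hmeas 1 0 3 (by decide) (by decide)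
    exact h.comp (measurable_fst.mul measurable_snd) measurable_id
  have hI2 : IndepFun (fun ω => (1 - Z2 ω) * (1 - W ω)) X2 P := by
    have h := hindep.indepFun_prodMk hmeas 2 0 4 (by decide) (by decide)
    exact h.comp ((measurable_const.sub measurable_fst).mul
      (measurable_const.sub measurable_snd)) measurable_id
  have hI1' : IndepFun (fun ω => (1 - Z1 ω) * W ω) X1 P := by
    have h := hindep.indepFun_prodMk hmeas 1 0 3 (by decide) (by decide)
    exact h.comp ((measurable_const.sub measurable_fst).mul measurable_snd) measurable_id
  have hI2' : IndepFun (fun ω => Z2 ω * (1 - W ω)) X2 P := by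
    have h := hindep.indepFun_prodMk hmeas 2 0 4 (by decide) (by decide)
    exact h.comp (measurable_fst.mul (measurable_const.sub measurable_snd)) measurable_id
  -- 0/1-valuedness
  have hB101 : ∀ ω, Z1 ω * W ω = 0 ∨ Z1 ω * W ω = 1 := fun ω => by
    rcases hZ101 ω with h | h <;> rcases hW01 ω with h' | h' <;> simp [h, h']
  have hB201 : ∀ ω, (1 - Z2 ω) * (1 - W ω) = 0 ∨ (1 - Z2 ω) * (1 - W ω) = 1 := fun ω => by
    rcases hZ201 ω with h | h <;> rcases hW01 ω with h' | h' <;> simp [h, h']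
  have hB101' : ∀ ω, (1 - Z1 ω) * W ω = 0 ∨ (1 - Z1 ω) * W ω = 1 := fun ω => by
    rcases hZ101 ω with h | h <;> rcases hW01 ω with h' | h' <;> simp [h, h']
  have hB201' : ∀ ω, Z2 ω * (1 - W ω) = 0 ∨ Z2 ω * (1 - W ω) = 1 := fun ω => by
    rcases hZ201 ω with h | h <;> rcases hW01 ω with h' | h' <;> simp [h, h']
  have hB12 : ∀ ω, (Z1 ω * W ω) * ((1 - Z2 ω) * (1 - W ω)) = 0 := fun ω => by
    rcases hW01 ω with h | h <;> simp [h] <;> ring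
  have hB12' : ∀ ω, ((1 - Z1 ω) * W ω) * (Z2 ω * (1 - W ω)) = 0 := fun ω => by
    rcases hW01 ω with h | h <;> simp [h] <;> ring
  have ha' : 1 - a = 1 / (Real.exp ε + 1) := by
    rw [ha]; field_simp
    ring
  constructor
  · refine (var_two_blocks P (fun ω => Z1 ω * W ω) (fun ω => (1 - Z2 ω) * (1 - W ω)) X1 X2
      (a * pgrp) ((1 - a) * (1 - pgrp)) μ1 μ2 (σ1 ^ 2) (σ2 ^ 2)
      (hZ1m.mul hWm) ((measurable_const.sub hZ2m).mul (measurable_const.sub hWm))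
      hX1m hX2m hB101 hB201 hB12 hI1 hI2 hq1 hq2 hX1sq hX2sq hX1 hX2 hVar1 hVar2).trans ?_
    rw [ha]
    field_simp
    ring
  · refine (var_two_blocks P (fun ω => (1 - Z1 ω) * W ω) (fun ω => Z2 ω * (1 - W ω)) X1 X2
      ((1 - a) * pgrp) (a * (1 - pgrp)) μ1 μ2 (σ1 ^ 2) (σ2 ^ 2)
      ((measurable_const.sub hZ1m).mul hWm) (hZ2m.mul (measurable_const.sub hWm))
      hX1m hX2m hB101' hB201' hB12' hI1' hI2' hq1' hq2' hX1sq hX2sq hX1 hX2 hVar1 hVar2).trans ?_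
    rw [ha]
    field_simp
    ring
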